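/- Let X : \D \to \C be holomorphic, let G \subset \C be open, let \Omega = X^{-1}(G), and let v : G \to [0,1) be harmonic and continuous up to those boundary points of G that lie in the closure of X(\D), with v = 0 at all such boundary points. Define H : \D \to \R by H = v \circ X on \Omega and H = 0 on \D \setminus \Omega. Then H is continuous on \D and subharmonic on \D. -/

import Mathlib

open scoped Classical

open Complex Set Metric Real Filter MeasureTheory

open Topology

/-- `u` is harmonic on `s ⊆ ℂ`: it is `C²` there and its Laplacian vanishes. -/
def HarmonicOnSet (u : ℂ → ℝ) (s : Set ℂ) : Prop :=
  ContDiffOn ℝ 2 u s ∧ ∀ z ∈ s,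
    iteratedFDeriv ℝ 2 u z ![1, 1] + iteratedFDeriv ℝ 2 u z ![Complex.I, Complex.I] = 0

/-- `H` is subharmonic on the open set `s`: it is upper semicontinuous and satisfies the
sub-mean-value inequality on all sufficiently small circles about each point of `s`. -/
def SubharmonicOnSet (H : ℂ → ℝ) (s : Set ℂ) : Prop :=
  UpperSemicontinuousOn H s ∧ ∀ z ∈ s, ∃ r₀ > (0 : ℝ), ∀ r : ℝ, 0 < r → r ≤ r₀ →
    H z ≤ (1 / (2 * π)) * ∫ θ in (0 : ℝ)..(2 * π), H (z + r * Complex.exp (θ * Complex.I))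

-- helper: real-CLM on ℂ determined by values at 1 and I
lemma clm_apply_complex {E : Type*} [NormedAddCommGroup E] [NormedSpace ℝ E]
    (L : ℂ →L[ℝ] E) (z : ℂ) : L z = z.re • L 1 + z.im • L Complex.I := by
  conv_lhs => rw [show z = z.re • (1:ℂ) + z.im • Complex.I by
    simp [Complex.real_smul]]
  rw [map_add, L.map_smul, L.map_smul]

lemma abs_of_uIcc {t c d : ℝ} (h : t ∈ Set.uIcc c d) : |t - c| ≤ |d - c| := by
  rcases le_total c d with h' | h'
  · rw [Set.uIcc_of_le h'] at h
    rw [_root_.abs_of_nonneg (by linarith [h.1]), _root_.abs_of_nonneg (by linarith)]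
    linarith [h.2]
  · rw [Set.uIcc_of_ge h'] at h
    rw [_root_.abs_of_nonpos (by linarith [h.2]), _root_.abs_of_nonpos (by linarith)]
    linarith [h.1]

lemma dist_le_of_components {ζ z' p : ℂ} (h1 : |ζ.re - p.re| ≤ |z'.re - p.re|)
    (h2 : |ζ.im - p.im| ≤ |z'.im - p.im|) : dist ζ p ≤ dist z' p := by
  rw [Complex.dist_eq_re_im, Complex.dist_eq_re_im]
  apply Real.sqrt_le_sqrt
  have e1 : (ζ.re - p.re)^2 ≤ (z'.re - p.re)^2 := by
    rw [← _root_.sq_abs (ζ.re - p.re), ← _root_.sq_abs (z'.re - p.re)]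
    exact pow_le_pow_left₀ (abs_nonneg _) h1 2
  have e2 : (ζ.im - p.im)^2 ≤ (z'.im - p.im)^2 := by
    rw [← _root_.sq_abs (ζ.im - p.im), ← _root_.sq_abs (z'.im - p.im)]
    exact pow_le_pow_left₀ (abs_nonneg _) h2 2
  linarith

lemma holo_circle_mean (g : ℂ → ℂ) (c : ℂ) (r : ℝ) (hr : 0 < r)
    (hc : ContinuousOn g (closedBall c r))
    (hd : ∀ x ∈ ball c r, DifferentiableAt ℂ g x) :
    (∫ θ in (0:ℝ)..(2*π), g (c + r * Complex.exp (θ * Complex.I)))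
      = ((2*π : ℝ) : ℂ) * g c := by
  have h := Complex.circleIntegral_sub_center_inv_smul_of_differentiable_on_off_countable hr
    Set.countable_empty hc (fun x hx => hd x hx.1)
  have h2 : (∮ x in C(c, r), (x - c)⁻¹ • g x)
      = Complex.I * ∫ θ in (0:ℝ)..(2*π), g (circleMap c r θ) := by
    rw [circleIntegral, ← intervalIntegral.integral_const_mul]
    refine intervalIntegral.integral_congr fun θ hθ => ?_
    have h0 : circleMap 0 r θ ≠ 0 := circleMap_ne_center (c := 0) hr.ne'
    simp only [deriv_circleMap, circleMap_sub_center, smul_eq_mul]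
    field_simp
  rw [h2] at h
  have : (∫ θ in (0:ℝ)..(2*π), g (circleMap c r θ)) = ((2*π:ℝ):ℂ) * g c := by
    apply mul_left_cancel₀ Complex.I_ne_zero
    rw [h, smul_eq_mul]
    push_cast
    ring
  simpa [circleMap] using this

lemma horiz_seg_mem {p : ℂ} {ρ : ℝ} {x₁ x₂ y : ℝ}
    (h1 : (x₁ : ℂ) + y * Complex.I ∈ ball p ρ) (h2 : (x₂ : ℂ) + y * Complex.I ∈ ball p ρ)
    {t : ℝ} (ht : t ∈ Set.uIcc x₁ x₂) : (t : ℂ) + y * Complex.I ∈ ball p ρ := by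
  have hseg := (convex_ball p ρ).segment_subset h1 h2
  rw [← segment_eq_uIcc] at ht
  obtain ⟨a, b, ha, hb, hab, rfl⟩ := ht
  apply hseg
  refine ⟨a, b, ha, hb, hab, ?_⟩
  have hab' : (a : ℂ) + b = 1 := by exact_mod_cast congrArg (Complex.ofReal) hab
  simp only [smul_eq_mul, Complex.real_smul]
  push_cast
  linear_combination (y * Complex.I) * hab'

lemma vert_seg_mem {p : ℂ} {ρ : ℝ} {x y₁ y₂ : ℝ}
    (h1 : (x : ℂ) + y₁ * Complex.I ∈ ball p ρ) (h2 : (x : ℂ) + y₂ * Complex.I ∈ ball p ρ)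
    {t : ℝ} (ht : t ∈ Set.uIcc y₁ y₂) : (x : ℂ) + t * Complex.I ∈ ball p ρ := by
  have hseg := (convex_ball p ρ).segment_subset h1 h2
  rw [← segment_eq_uIcc] at ht
  obtain ⟨a, b, ha, hb, hab, rfl⟩ := ht
  apply hseg
  refine ⟨a, b, ha, hb, hab, ?_⟩
  have hab' : (a : ℂ) + b = 1 := by exact_mod_cast congrArg (Complex.ofReal) hab
  simp only [smul_eq_mul, Complex.real_smul]
  push_cast
  linear_combination (x : ℂ) * hab'



lemma harmonic_exists_holo (u : ℂ → ℝ) (s : Set ℂ) (hs : IsOpen s)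
    (hu : HarmonicOnSet u s) {p : ℂ} {ρ : ℝ} (hρ : 0 < ρ) (hball : ball p ρ ⊆ s) :
    ∃ f : ℂ → ℂ, (∀ z ∈ ball p ρ, DifferentiableAt ℂ f z) ∧
      ∀ z ∈ ball p ρ, (f z).re = u z := by
  obtain ⟨hC2, hLap⟩ := hu
  have hdiff : ∀ x ∈ s, HasFDerivAt u (fderiv ℝ u x) x := fun x hx =>
    ((hC2.differentiableOn two_ne_zero).differentiableAt (hs.mem_nhds hx)).hasFDerivAt
  have hu'C1 : ContDiffOn ℝ 1 (fun y => fderiv ℝ u y) s :=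
    hC2.fderiv_of_isOpen hs (by norm_num)
  have hu'diff : ∀ x ∈ s, HasFDerivAt (fun y => fderiv ℝ u y) (fderiv ℝ (fderiv ℝ u) x) x :=
    fun x hx => ((hu'C1.differentiableOn one_ne_zero).differentiableAt (hs.mem_nhds hx)).hasFDerivAt
  have hsymm : ∀ x ∈ s, ∀ a b : ℂ,
      fderiv ℝ (fderiv ℝ u) x a b = fderiv ℝ (fderiv ℝ u) x b a := by
    intro x hx a b
    exact second_derivative_symmetric_of_eventually
      (Filter.eventually_of_mem (hs.mem_nhds hx) fun y hy => hdiff y hy) (hu'diff x hx) a b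
  have hLap' : ∀ x ∈ s, fderiv ℝ (fderiv ℝ u) x Complex.I Complex.I
      = - fderiv ℝ (fderiv ℝ u) x 1 1 := by
    intro x hx
    have h := hLap x hx
    rw [iteratedFDeriv_two_apply, iteratedFDeriv_two_apply] at h
    simp only [Matrix.cons_val_zero, Matrix.cons_val_one, Matrix.head_cons] at h
    linarith
  set w : ℂ → ℂ := fun x => ((fderiv ℝ u x 1 : ℝ) : ℂ)
      - Complex.I * ((fderiv ℝ u x Complex.I : ℝ) : ℂ) with hw_def
  have hwre : ∀ x, (w x).re = fderiv ℝ u x 1 := by intro x; simp [hw_def]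
  have hwd : ∀ x ∈ s, HasDerivAt w (((fderiv ℝ (fderiv ℝ u) x 1 1 : ℝ) : ℂ)
      - Complex.I * ((fderiv ℝ (fderiv ℝ u) x 1 Complex.I : ℝ) : ℂ)) x := by
    intro x hx
    set B := fderiv ℝ (fderiv ℝ u) x with hB
    set L1 : ℂ →L[ℝ] ℂ :=
      Complex.ofRealCLM.comp ((ContinuousLinearMap.apply ℝ ℝ (1:ℂ)).comp B) with hL1
    set L2 : ℂ →L[ℝ] ℂ :=
      Complex.ofRealCLM.comp ((ContinuousLinearMap.apply ℝ ℝ (Complex.I)).comp B) with hL2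
    have h1 : HasFDerivAt (fun y => ((fderiv ℝ u y 1 : ℝ) : ℂ)) L1 x :=
      Complex.ofRealCLM.hasFDerivAt.comp x
        ((ContinuousLinearMap.apply ℝ ℝ (1:ℂ)).hasFDerivAt.comp x (hu'diff x hx))
    have h2 : HasFDerivAt (fun y => ((fderiv ℝ u y Complex.I : ℝ) : ℂ)) L2 x :=
      Complex.ofRealCLM.hasFDerivAt.comp x
        ((ContinuousLinearMap.apply ℝ ℝ (Complex.I)).hasFDerivAt.comp x (hu'diff x hx))
    have h3 : HasFDerivAt w (L1 - Complex.I • L2) x := h1.sub (h2.const_mul Complex.I)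
    have happ : ∀ e : ℂ, (L1 - Complex.I • L2) e
        = ((B e 1 : ℝ) : ℂ) - Complex.I * ((B e Complex.I : ℝ) : ℂ) := by
      intro e; simp [hL1, hL2]
    have hCR : (L1 - Complex.I • L2) Complex.I
        = Complex.I * (L1 - Complex.I • L2) 1 := by
      rw [happ, happ]
      rw [hsymm x hx Complex.I 1, hLap' x hx]
      push_cast
      linear_combination (((B 1 Complex.I : ℝ)) : ℂ) * Complex.I_sq
    set d : ℂ := (L1 - Complex.I • L2) 1 with hd
    have hres : ((1 : ℂ →L[ℂ] ℂ).smulRight d).restrictScalars ℝ = L1 - Complex.I • L2 := by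
      apply ContinuousLinearMap.ext
      intro z
      have hz := clm_apply_complex (L1 - Complex.I • L2) z
      rw [hCR, ← hd] at hz
      calc (((1 : ℂ →L[ℂ] ℂ).smulRight d).restrictScalars ℝ) z
          = z * d := by simp
        _ = (L1 - Complex.I • L2) z := by
            rw [hz]
            simp only [smul_eq_mul, Complex.real_smul]
            conv_lhs => rw [← Complex.re_add_im z]
            push_cast
            ring
    have h4 : HasFDerivAt w ((1 : ℂ →L[ℂ] ℂ).smulRight d) x :=
      hasFDerivAt_of_restrictScalars ℝ h3 hres
    have h5 : HasDerivAt w d x := by simpa using h4.hasDerivAt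
    have hd' : d = ((B 1 1 : ℝ) : ℂ) - Complex.I * ((B 1 Complex.I : ℝ) : ℂ) := by
      rw [hd, happ]
    rw [hd'] at h5
    exact h5
  have hwC : ∀ x ∈ s, ContinuousAt w x := fun x hx => (hwd x hx).continuousAt
  have hwball : ContinuousOn w (ball p ρ) := fun x hx =>
    (hwC x (hball hx)).continuousWithinAt
  have hmem_re_level : ∀ z ∈ ball p ρ, ((z.re : ℂ) + p.im * Complex.I) ∈ ball p ρ := by
    intro z hz
    rw [mem_ball] at hz ⊢
    calc dist ((z.re : ℂ) + p.im * Complex.I) p ≤ dist z p := by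
          apply dist_le_of_components <;> simp
      _ < ρ := hz
  have hintH : ∀ (y x₁ x₂ : ℝ), ((x₁:ℂ) + y * Complex.I) ∈ ball p ρ →
      ((x₂:ℂ) + y * Complex.I) ∈ ball p ρ →
      IntervalIntegrable (fun t : ℝ => w ((t:ℂ) + y * Complex.I)) volume x₁ x₂ := by
    intro y x₁ x₂ h1 h2
    apply ContinuousOn.intervalIntegrable
    apply hwball.comp ((Complex.continuous_ofReal.add continuous_const).continuousOn)
    intro t ht
    exact horiz_seg_mem h1 h2 ht
  have hintV : ∀ (x y₁ y₂ : ℝ), ((x:ℂ) + y₁ * Complex.I) ∈ ball p ρ →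
      ((x:ℂ) + y₂ * Complex.I) ∈ ball p ρ →
      IntervalIntegrable (fun t : ℝ => w ((x:ℂ) + t * Complex.I)) volume y₁ y₂ := by
    intro x y₁ y₂ h1 h2
    apply ContinuousOn.intervalIntegrable
    apply hwball.comp ((continuous_const.add
      (Complex.continuous_ofReal.mul continuous_const)).continuousOn)
    intro t ht
    exact vert_seg_mem h1 h2 ht
  set F : ℂ → ℂ := fun z =>
    (∫ t in p.re..z.re, w ((t:ℂ) + p.im * Complex.I)) +
      Complex.I * ∫ t in p.im..z.im, w ((z.re:ℂ) + t * Complex.I) with hF_def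
  have habsre : ∀ z z' : ℂ, |z.re - z'.re| ≤ dist z z' := by
    intro z z'
    rw [Complex.dist_eq]
    simpa using Complex.abs_re_le_norm (z - z')
  have habsim : ∀ z z' : ℂ, |z.im - z'.im| ≤ dist z z' := by
    intro z z'
    rw [Complex.dist_eq]
    simpa using Complex.abs_im_le_norm (z - z')
  have hFd : ∀ z₀ ∈ ball p ρ, HasDerivAt F (w z₀) z₀ := by
    intro z₀ hz₀
    have hδ : 0 < ρ - dist z₀ p := by rw [mem_ball] at hz₀; linarith
    set δ := ρ - dist z₀ p with hδdef
    have hz0mem' : ((z₀.re:ℂ) + z₀.im * Complex.I) ∈ ball p ρ := by rwa [Complex.re_add_im]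
    have hz0relev : ((z₀.re:ℂ) + p.im * Complex.I) ∈ ball p ρ := hmem_re_level z₀ hz₀
    have hpmem' : ((p.re:ℂ) + p.im * Complex.I) ∈ ball p ρ := by
      rw [Complex.re_add_im]; exact mem_ball_self hρ
    have hnear : ∀ z ∈ ball z₀ (δ/4), z ∈ ball p ρ ∧
        ((z.re:ℂ) + z₀.im * Complex.I) ∈ ball p ρ := by
      intro z hzb
      rw [mem_ball] at hzb
      constructor
      · rw [mem_ball]
        calc dist z p ≤ dist z z₀ + dist z₀ p := dist_triangle _ _ _
          _ < δ/4 + (ρ - δ) := by rw [hδdef]; push_cast; linarith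
          _ ≤ ρ := by linarith
      · rw [mem_ball]
        have h1 : dist ((z.re:ℂ) + z₀.im * Complex.I) z₀ = dist z.re z₀.re := by
          rw [Complex.dist_of_im_eq (by simp)]; simp
        calc dist ((z.re:ℂ) + z₀.im * Complex.I) p
            ≤ dist ((z.re:ℂ) + z₀.im * Complex.I) z₀ + dist z₀ p := dist_triangle _ _ _
          _ ≤ dist z z₀ + dist z₀ p := by
              rw [h1]
              have h2 : dist z.re z₀.re ≤ dist z z₀ := by
                rw [Real.dist_eq]; exact habsre z z₀
              linarith
          _ < δ/4 + (ρ - δ) := by rw [hδdef]; linarith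
          _ ≤ ρ := by linarith
    have key : ∀ z ∈ ball z₀ (δ/4),
        F z - F z₀ = (∫ t in z₀.re..z.re, w ((t:ℂ) + z₀.im * Complex.I))
          + Complex.I * ∫ t in z₀.im..z.im, w ((z.re:ℂ) + t * Complex.I) := by
      intro z hzb
      obtain ⟨hzball, hq1⟩ := hnear z hzb
      rw [mem_ball] at hzb
      have hzrelev : ((z.re:ℂ) + p.im * Complex.I) ∈ ball p ρ := hmem_re_level z hzball
      have hzmem' : ((z.re:ℂ) + z.im * Complex.I) ∈ ball p ρ := by rwa [Complex.re_add_im]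
      have hRsub : (Set.uIcc z₀.re z.re) ×ℂ (Set.uIcc p.im z₀.im) ⊆ ball p ρ := by
        intro ζ hζ
        rw [Complex.mem_reProdIm] at hζ
        obtain ⟨hζre, hζim⟩ := hζ
        have e2 : |ζ.re - z₀.re| ≤ |z.re - z₀.re| := abs_of_uIcc hζre
        have e3 : |z.re - z₀.re| ≤ dist z z₀ := habsre z z₀
        have e4 : dist ((z₀.re:ℂ) + ζ.im * Complex.I) p ≤ dist z₀ p := by
          have := dist_le_of_components (ζ := (z₀.re:ℂ) + ζ.im * Complex.I) (z' := z₀) (p := p)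
            (by simp) (by simpa using abs_of_uIcc hζim)
          exact this
        have e1 : dist ζ ((z₀.re:ℂ) + ζ.im * Complex.I) = dist ζ.re z₀.re := by
          rw [Complex.dist_of_im_eq (by simp)]; simp
        rw [mem_ball]
        calc dist ζ p ≤ dist ζ ((z₀.re:ℂ) + ζ.im * Complex.I)
              + dist ((z₀.re:ℂ) + ζ.im * Complex.I) p := dist_triangle _ _ _
          _ ≤ dist z z₀ + dist z₀ p := by
              rw [e1, Real.dist_eq]
              have : |ζ.re - z₀.re| ≤ dist z z₀ := le_trans e2 e3
              linarith
          _ < δ/4 + (ρ - δ) := by rw [hδdef]; linarith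
          _ ≤ ρ := by linarith
      have hrect := Complex.integral_boundary_rect_eq_zero_of_differentiableOn w
        ((z₀.re:ℂ) + (p.im:ℝ) * Complex.I) ((z.re:ℂ) + (z₀.im:ℝ) * Complex.I)
        (by
          intro ζ hζ
          apply ((hwd ζ (hball (hRsub (by simpa using hζ)))).differentiableAt).differentiableWithinAt)
      simp only [Complex.add_re, Complex.add_im, Complex.ofReal_re, Complex.ofReal_im,
        Complex.mul_I_re, Complex.mul_I_im, neg_zero, add_zero, zero_add,
        smul_eq_mul] at hrect
      have i1 := hintH p.im p.re z₀.re hpmem' hz0relev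
      have i2 := hintH p.im z₀.re z.re hz0relev hzrelev
      have i3 := hintV z.re p.im z₀.im hzrelev hq1
      have i4 := hintV z.re z₀.im z.im hq1 hzmem'
      have e1 := intervalIntegral.integral_add_adjacent_intervals i1 i2
      have e2 := intervalIntegral.integral_add_adjacent_intervals i3 i4
      simp only [hF_def]
      linear_combination (-1 : ℂ) * e1 - Complex.I * e2 + hrect
    rw [hasDerivAt_iff_isLittleO, Asymptotics.isLittleO_iff]
    intro c hc
    obtain ⟨δ₁, hδ₁pos, hδ₁⟩ :=
      Metric.continuousAt_iff.mp (hwC z₀ (hball hz₀)) (c/2) (by linarith)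
    have hmin : 0 < min (δ/4) (δ₁/2) := lt_min (by linarith) (by linarith)
    filter_upwards [Metric.ball_mem_nhds z₀ hmin] with z hzb
    have hz4 : z ∈ ball z₀ (δ/4) := mem_ball.2 (lt_of_lt_of_le (mem_ball.1 hzb) (min_le_left _ _))
    have hzd : dist z z₀ < δ₁/2 := lt_of_lt_of_le (mem_ball.1 hzb) (min_le_right _ _)
    obtain ⟨hzball, hq1⟩ := hnear z hz4
    have hzmem' : ((z.re:ℂ) + z.im * Complex.I) ∈ ball p ρ := by rwa [Complex.re_add_im]
    rw [key z hz4]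
    have iA : IntervalIntegrable (fun t : ℝ => w ((t:ℂ) + z₀.im * Complex.I)) volume z₀.re z.re :=
      hintH z₀.im z₀.re z.re hz0mem' hq1
    have iB : IntervalIntegrable (fun t : ℝ => w ((z.re:ℂ) + t * Complex.I)) volume z₀.im z.im :=
      hintV z.re z₀.im z.im hq1 hzmem'
    have eA : (∫ t in z₀.re..z.re, w ((t:ℂ) + z₀.im * Complex.I))
          - ((z.re - z₀.re : ℝ) : ℂ) * w z₀
        = ∫ t in z₀.re..z.re, (w ((t:ℂ) + z₀.im * Complex.I) - w z₀) := by
      rw [intervalIntegral.integral_sub iA intervalIntegrable_const,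
        intervalIntegral.integral_const]
      simp [Complex.real_smul]
    have eB : (∫ t in z₀.im..z.im, w ((z.re:ℂ) + t * Complex.I))
          - ((z.im - z₀.im : ℝ) : ℂ) * w z₀
        = ∫ t in z₀.im..z.im, (w ((z.re:ℂ) + t * Complex.I) - w z₀) := by
      rw [intervalIntegral.integral_sub iB intervalIntegrable_const,
        intervalIntegral.integral_const]
      simp [Complex.real_smul]
    have hzz : z - z₀ = ((z.re - z₀.re : ℝ) : ℂ) + ((z.im - z₀.im : ℝ) : ℂ) * Complex.I := by
      apply Complex.ext <;> simp
    have hsplit : (∫ t in z₀.re..z.re, w ((t:ℂ) + z₀.im * Complex.I))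
          + Complex.I * (∫ t in z₀.im..z.im, w ((z.re:ℂ) + t * Complex.I))
          - (z - z₀) • w z₀
        = (∫ t in z₀.re..z.re, (w ((t:ℂ) + z₀.im * Complex.I) - w z₀))
          + Complex.I * ∫ t in z₀.im..z.im, (w ((z.re:ℂ) + t * Complex.I) - w z₀) := by
      rw [smul_eq_mul, hzz, ← eA, ← eB]; ring
    rw [hsplit]
    have nA : ‖∫ t in z₀.re..z.re, (w ((t:ℂ) + z₀.im * Complex.I) - w z₀)‖
        ≤ (c/2) * |z.re - z₀.re| := by
      apply intervalIntegral.norm_integral_le_of_norm_le_const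
      intro t ht
      have ht' : t ∈ Set.uIcc z₀.re z.re := Set.uIoc_subset_uIcc ht
      have hdist : dist ((t:ℂ) + z₀.im * Complex.I) z₀ < δ₁ := by
        have e0 : dist ((t:ℂ) + z₀.im * Complex.I) z₀ = dist t z₀.re := by
          rw [Complex.dist_of_im_eq (by simp)]; simp
        rw [e0, Real.dist_eq]
        calc |t - z₀.re| ≤ |z.re - z₀.re| := abs_of_uIcc ht'
          _ ≤ dist z z₀ := habsre z z₀
          _ < δ₁ := by linarith
      have := hδ₁ hdist
      rw [dist_eq_norm] at this
      linarith
    have nB : ‖∫ t in z₀.im..z.im, (w ((z.re:ℂ) + t * Complex.I) - w z₀)‖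
        ≤ (c/2) * |z.im - z₀.im| := by
      apply intervalIntegral.norm_integral_le_of_norm_le_const
      intro t ht
      have ht' : t ∈ Set.uIcc z₀.im z.im := Set.uIoc_subset_uIcc ht
      have hdist : dist ((z.re:ℂ) + t * Complex.I) z₀ < δ₁ := by
        have e0 : dist ((z.re:ℂ) + t * Complex.I) ((z₀.re:ℂ) + t * Complex.I)
            = dist z.re z₀.re := by
          rw [Complex.dist_of_im_eq (by simp)]; simp
        have e1 : dist ((z₀.re:ℂ) + t * Complex.I) z₀ = dist t z₀.im := by
          rw [Complex.dist_of_re_eq (by simp)]; simp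
        calc dist ((z.re:ℂ) + t * Complex.I) z₀
            ≤ dist ((z.re:ℂ) + t * Complex.I) ((z₀.re:ℂ) + t * Complex.I)
              + dist ((z₀.re:ℂ) + t * Complex.I) z₀ := dist_triangle _ _ _
          _ ≤ dist z z₀ + |z.im - z₀.im| := by
              rw [e0, e1, Real.dist_eq, Real.dist_eq]
              have h2 : |z.re - z₀.re| ≤ dist z z₀ := habsre z z₀
              have h3 : |t - z₀.im| ≤ |z.im - z₀.im| := abs_of_uIcc ht'
              linarith
          _ ≤ dist z z₀ + dist z z₀ := by linarith [habsim z z₀]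
          _ < δ₁ := by linarith
      have := hδ₁ hdist
      rw [dist_eq_norm] at this
      linarith
    have hre : |z.re - z₀.re| ≤ ‖z - z₀‖ := by
      simpa using Complex.abs_re_le_norm (z - z₀)
    have him : |z.im - z₀.im| ≤ ‖z - z₀‖ := by
      simpa using Complex.abs_im_le_norm (z - z₀)
    calc ‖(∫ t in z₀.re..z.re, (w ((t:ℂ) + z₀.im * Complex.I) - w z₀))
          + Complex.I * ∫ t in z₀.im..z.im, (w ((z.re:ℂ) + t * Complex.I) - w z₀)‖
        ≤ ‖∫ t in z₀.re..z.re, (w ((t:ℂ) + z₀.im * Complex.I) - w z₀)‖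
          + ‖Complex.I * ∫ t in z₀.im..z.im, (w ((z.re:ℂ) + t * Complex.I) - w z₀)‖ :=
          norm_add_le _ _
      _ = ‖∫ t in z₀.re..z.re, (w ((t:ℂ) + z₀.im * Complex.I) - w z₀)‖
          + ‖∫ t in z₀.im..z.im, (w ((z.re:ℂ) + t * Complex.I) - w z₀)‖ := by
          rw [norm_mul, Complex.norm_I, one_mul]
      _ ≤ (c/2) * |z.re - z₀.re| + (c/2) * |z.im - z₀.im| := by linarith
      _ ≤ (c/2) * ‖z - z₀‖ + (c/2) * ‖z - z₀‖ := by
          have := norm_nonneg (z - z₀)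
          nlinarith
      _ = c * ‖z - z₀‖ := by ring
  -- Re F - u is constant on the ball
  have hgrad : ∀ z ∈ ball p ρ, HasFDerivAt (fun ζ => (F ζ).re - u ζ) (0 : ℂ →L[ℝ] ℝ) z := by
    intro z hz
    have h1 : HasFDerivAt F (((1 : ℂ →L[ℂ] ℂ).smulRight (w z)).restrictScalars ℝ) z :=
      ((hFd z hz).hasFDerivAt).restrictScalars ℝ
    have h2 : HasFDerivAt (fun ζ => (F ζ).re)
        (Complex.reCLM.comp (((1 : ℂ →L[ℂ] ℂ).smulRight (w z)).restrictScalars ℝ)) z :=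
      Complex.reCLM.hasFDerivAt.comp z h1
    have h3 := h2.sub (hdiff z (hball hz))
    have hDzero : Complex.reCLM.comp (((1 : ℂ →L[ℂ] ℂ).smulRight (w z)).restrictScalars ℝ)
        - fderiv ℝ u z = 0 := by
      set D := Complex.reCLM.comp (((1 : ℂ →L[ℂ] ℂ).smulRight (w z)).restrictScalars ℝ)
        - fderiv ℝ u z with hD
      have hD1 : D 1 = 0 := by simp [hD, hw_def]
      have hDI : D Complex.I = 0 := by simp [hD, hw_def]
      apply ContinuousLinearMap.ext
      intro ζ
      rw [clm_apply_complex D ζ, hD1, hDI]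
      simp
    rwa [hDzero] at h3
  have hconst : ∀ z ∈ ball p ρ, (F z).re - u z = (F p).re - u p := by
    intro z hz
    exact Convex.is_const_of_fderivWithin_eq_zero (convex_ball p ρ)
      (fun ζ hζ => ((hgrad ζ hζ).differentiableAt).differentiableWithinAt)
      (fun ζ hζ => by
        rw [fderivWithin_of_isOpen isOpen_ball hζ]
        exact (hgrad ζ hζ).fderiv) hz (mem_ball_self hρ)
  refine ⟨fun z => F z - (((F p).re - u p : ℝ) : ℂ),
    fun z hz => ((hFd z hz).differentiableAt).sub_const _, fun z hz => ?_⟩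
  have hc := hconst z hz
  simp only [Complex.sub_re, Complex.ofReal_re]
  linarith


set_option maxHeartbeats 1000000 in
/-- Gluing lemma: if `X` is holomorphic on the disk, `v : G → [0,1)` is harmonic and
vanishes continuously at the boundary points of `G` lying in the closure of `X(𝔻)`, then
`H = v ∘ X` on `X⁻¹(G)`, extended by `0`, is continuous and subharmonic on the disk. -/
theorem glued_function_subharmonic
    (X : ℂ → ℂ) (hX : DifferentiableOn ℂ X (ball (0 : ℂ) 1))
    (G : Set ℂ) (hG : IsOpen G)
    (v : ℂ → ℝ) (hv : HarmonicOnSet v G)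
    (hv01 : ∀ z ∈ G, 0 ≤ v z ∧ v z < 1)
    (hvbd : ∀ p ∈ frontier G ∩ closure (X '' ball (0 : ℂ) 1),
      Filter.Tendsto v (nhdsWithin p G) (nhds 0))
    (H : ℂ → ℝ)
    (hH : ∀ z ∈ ball (0 : ℂ) 1, H z = if X z ∈ G then v (X z) else 0) :
    ContinuousOn H (ball (0 : ℂ) 1) ∧ SubharmonicOnSet H (ball (0 : ℂ) 1) := by
  set K : ℂ → ℝ := fun z => if X z ∈ G then v (X z) else 0 with hK_def
  have hXc : ∀ z ∈ ball (0:ℂ) 1, ContinuousAt X z := fun z hz =>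
    hX.continuousOn.continuousAt (isOpen_ball.mem_nhds hz)
  have hΩ : IsOpen (ball (0:ℂ) 1 ∩ X ⁻¹' G) :=
    hX.continuousOn.isOpen_inter_preimage isOpen_ball hG
  have hKcont : ∀ z ∈ ball (0:ℂ) 1, ContinuousAt K z := by
    intro z hz
    by_cases hXz : X z ∈ G
    · have hmem : ball (0:ℂ) 1 ∩ X ⁻¹' G ∈ 𝓝 z := hΩ.mem_nhds ⟨hz, hXz⟩
      have hEq : K =ᶠ[𝓝 z] fun ζ => v (X ζ) := by
        filter_upwards [hmem] with ζ hζ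
        simp only [hK_def]
        exact if_pos hζ.2
      have hvc : ContinuousAt (fun ζ => v (X ζ)) z :=
        (hv.1.continuousOn.continuousAt (hG.mem_nhds hXz)).comp (hXc z hz)
      exact hvc.congr hEq.symm
    · by_cases hcl : X z ∈ closure G
      · have hfr : X z ∈ frontier G := ⟨hcl, by rwa [hG.interior_eq]⟩
        have hXcl : X z ∈ closure (X '' ball (0:ℂ) 1) :=
          subset_closure (mem_image_of_mem X hz)
        have htd := hvbd (X z) ⟨hfr, hXcl⟩
        have hK0 : K z = 0 := by simp [hK_def, hXz]
        rw [ContinuousAt, hK0, Metric.tendsto_nhds]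
        intro ε hε
        have h1 : ∀ᶠ ζ in nhdsWithin (X z) G, dist (v ζ) 0 < ε :=
          (Metric.tendsto_nhds.mp htd) ε hε
        rw [eventually_nhdsWithin_iff] at h1
        have h2 := (hXc z hz).eventually h1
        filter_upwards [h2] with ζ hζ
        by_cases hζG : X ζ ∈ G
        · have := hζ hζG
          simpa [hK_def, hζG] using this
        · simpa [hK_def, hζG] using hε
      · have hmem : ball (0:ℂ) 1 ∩ X ⁻¹' (closure G)ᶜ ∈ 𝓝 z :=
          (hX.continuousOn.isOpen_inter_preimage isOpen_ball
            isClosed_closure.isOpen_compl).mem_nhds ⟨hz, hcl⟩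
        have hEq : K =ᶠ[𝓝 z] fun _ => (0:ℝ) := by
          filter_upwards [hmem] with ζ hζ
          have : X ζ ∉ G := fun h => hζ.2 (subset_closure h)
          simp [hK_def, this]
        exact continuousAt_const.congr hEq.symm
  have hHK : Set.EqOn H K (ball (0:ℂ) 1) := fun z hz => by
    rw [hH z hz]
  have hHc : ContinuousOn H (ball (0:ℂ) 1) :=
    ContinuousOn.congr (fun z hz => (hKcont z hz).continuousWithinAt) hHK
  refine ⟨hHc, hHc.upperSemicontinuousOn, ?_⟩
  intro z hz
  have hz1 : ‖z‖ < 1 := mem_ball_zero_iff.mp hz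
  by_cases hXz : X z ∈ G
  · obtain ⟨ρ, hρ, hρsub⟩ := Metric.isOpen_iff.mp hG (X z) hXz
    obtain ⟨f, hfd, hfre⟩ := harmonic_exists_holo v G hG hv hρ hρsub
    have hΩ' : IsOpen (ball (0:ℂ) 1 ∩ X ⁻¹' (ball (X z) ρ)) :=
      hX.continuousOn.isOpen_inter_preimage isOpen_ball isOpen_ball
    obtain ⟨ε, hε, hεsub⟩ := Metric.isOpen_iff.mp hΩ' z ⟨hz, mem_ball_self hρ⟩
    refine ⟨ε/2, by linarith, ?_⟩
    intro r hr hrε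
    have hcb : closedBall z r ⊆ ball (0:ℂ) 1 ∩ X ⁻¹' (ball (X z) ρ) := by
      intro ζ hζ
      apply hεsub
      rw [mem_ball]
      calc dist ζ z ≤ r := mem_closedBall.mp hζ
        _ < ε := by linarith
    set g : ℂ → ℂ := fun ζ => f (X ζ) with hg_def
    have hgd : ∀ ζ ∈ ball (0:ℂ) 1 ∩ X ⁻¹' (ball (X z) ρ), DifferentiableAt ℂ g ζ := by
      intro ζ hζ
      exact (hfd (X ζ) hζ.2).comp ζ (hX.differentiableAt (isOpen_ball.mem_nhds hζ.1))
    have hmean := holo_circle_mean g z r hr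
      (fun ζ hζ => ((hgd ζ (hcb hζ)).continuousAt).continuousWithinAt)
      (fun ζ hζ => hgd ζ (hcb (ball_subset_closedBall hζ)))
    have hcirc : ∀ θ : ℝ, z + r * Complex.exp (θ * Complex.I) ∈ closedBall z r := by
      intro θ
      rw [mem_closedBall, dist_eq_norm]
      simp [Complex.norm_exp_ofReal_mul_I, _root_.abs_of_nonneg hr.le]
    have hHeq : ∀ θ : ℝ, H (z + r * Complex.exp (θ * Complex.I))
        = (g (z + r * Complex.exp (θ * Complex.I))).re := by
      intro θ
      have hmem := hcb (hcirc θ)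
      rw [hH _ hmem.1, if_pos (hρsub hmem.2), hg_def]
      rw [hfre (X _) hmem.2]
    have hgc : Continuous fun θ : ℝ => g (z + (r:ℂ) * Complex.exp ((θ:ℂ) * Complex.I)) := by
      apply ContinuousOn.comp_continuous
        (fun ζ hζ => ((hgd ζ hζ).continuousAt).continuousWithinAt)
        (by continuity)
      intro θ
      exact hcb (hcirc θ)
    have hint : (∫ θ in (0:ℝ)..(2*π), H (z + r * Complex.exp (θ * Complex.I)))
        = (2*π) * v (X z) := by
      have e1 : (∫ θ in (0:ℝ)..(2*π), H (z + r * Complex.exp (θ * Complex.I)))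
          = ∫ θ in (0:ℝ)..(2*π), (g (z + r * Complex.exp (θ * Complex.I))).re :=
        intervalIntegral.integral_congr fun θ _ => hHeq θ
      have e2 := Complex.reCLM.intervalIntegral_comp_comm (μ := volume) (hgc.intervalIntegrable 0 (2*π))
      rw [e1]
      calc (∫ θ in (0:ℝ)..(2*π), (g (z + r * Complex.exp (θ * Complex.I))).re)
          = (∫ θ in (0:ℝ)..(2*π), g (z + r * Complex.exp (θ * Complex.I))).re := by
            simpa using e2
        _ = (((2*π : ℝ) : ℂ) * g z).re := by rw [hmean]
        _ = (2*π) * (g z).re := by simp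
        _ = (2*π) * v (X z) := by
            rw [hg_def]
            simp only []
            rw [hfre (X z) (mem_ball_self hρ)]
    have hHz : H z = v (X z) := by rw [hH z hz, if_pos hXz]
    rw [hHz, hint]
    have hπ : (0:ℝ) < π := Real.pi_pos
    apply le_of_eq
    field_simp
  · refine ⟨(1 - ‖z‖)/2, by linarith, ?_⟩
    intro r hr hrb
    have hHz : H z = 0 := by rw [hH z hz, if_neg hXz]
    rw [hHz]
    apply mul_nonneg (by positivity)
    apply intervalIntegral.integral_nonneg (by positivity)
    intro θ hθ
    have hmem : z + r * Complex.exp (θ * Complex.I) ∈ ball (0:ℂ) 1 := by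
      rw [mem_ball_zero_iff]
      calc ‖z + r * Complex.exp (θ * Complex.I)‖
          ≤ ‖z‖ + ‖(r:ℂ) * Complex.exp ((θ:ℂ) * Complex.I)‖ :=
            norm_add_le _ _
        _ = ‖z‖ + r := by
            rw [norm_mul, Complex.norm_exp_ofReal_mul_I, Complex.norm_of_nonneg hr.le]; ring
        _ ≤ ‖z‖ + (1 - ‖z‖)/2 := by linarith
        _ < 1 := by linarith
    rw [hH _ hmem]
    by_cases hG' : X (z + r * Complex.exp (θ * Complex.I)) ∈ G
    · rw [if_pos hG']; exact (hv01 _ hG').1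
    · rw [if_neg hG']
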